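/- The real number δ1 := 1 − 2·log(1 + √e) + 4·∫_1^{√e} (log u)/(u+1) du satisfies −0.657 < δ1 < −0.656. -/

import Mathlib

open Real Finset

-- cosh bounds from exp_bound with n = 7
lemma cosh_poly_bound {x : ℝ} (hx0 : 0 ≤ x) (hx : x ≤ 1/4) :
    |Real.cosh x - (1 + x^2/2 + x^4/24 + x^6/720)| ≤ x^7/4410 := by
  have hx1 : |x| ≤ 1 := by rw [abs_of_nonneg hx0]; linarith
  have hx1' : |(-x)| ≤ 1 := by rwa [abs_neg]
  have h1 := Real.exp_bound hx1 (n := 7) (by norm_num)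
  have h2 := Real.exp_bound hx1' (n := 7) (by norm_num)
  rw [abs_of_nonneg hx0] at h1
  rw [abs_neg, abs_of_nonneg hx0] at h2
  have e1 : (∑ m ∈ range 7, x ^ m / (Nat.factorial m) : ℝ)
      = 1 + x + x^2/2 + x^3/6 + x^4/24 + x^5/120 + x^6/720 := by
    simp [Finset.sum_range_succ, Nat.factorial]
    try ring
  have e2 : (∑ m ∈ range 7, (-x) ^ m / (Nat.factorial m) : ℝ)
      = 1 - x + x^2/2 - x^3/6 + x^4/24 - x^5/120 + x^6/720 := by
    simp [Finset.sum_range_succ, Nat.factorial]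
    try ring
  rw [e1] at h1; rw [e2] at h2
  have hb : x ^ 7 * ((Nat.succ 7 : ℕ) / ((Nat.factorial 7 : ℕ) * (7:ℕ) : ℝ)) = x^7 * (8 / 35280) := by
    norm_num [Nat.factorial]
  rw [hb] at h1 h2
  rw [Real.cosh_eq]
  rw [abs_le] at h1 h2 ⊢
  constructor <;> nlinarith [h1.1, h1.2, h2.1, h2.2]

set_option maxHeartbeats 2000000 in
lemma logcosh_bounds {x : ℝ} (hx0 : 0 ≤ x) (hx : x ≤ 1/4) :
    x^2/2 - x^4/8 ≤ Real.log (Real.cosh x) ∧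
    Real.log (Real.cosh x) ≤ x^2/2 - x^4/12 + (1/32)*x^6 := by
  have hc := cosh_poly_bound hx0 hx
  rw [abs_le] at hc
  obtain ⟨w, hwdef⟩ : ∃ w, Real.cosh x - 1 = w := ⟨_, rfl⟩
  have hcosh : Real.cosh x = 1 + w := by linarith
  rw [hcosh] at hc ⊢
  have hwlo : x^2/2 + x^4/24 + x^6/720 - x^7/4410 ≤ w := by linarith [hc.1]
  have hwhi : w ≤ x^2/2 + x^4/24 + x^6/720 + x^7/4410 := by linarith [hc.2]
  have hx2 : x^2 ≤ 1/16 := by nlinarith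
  have hp2 : (0:ℝ) ≤ x^2 := pow_nonneg hx0 2
  have hp4 : (0:ℝ) ≤ x^4 := pow_nonneg hx0 4
  have hp6 : (0:ℝ) ≤ x^6 := pow_nonneg hx0 6
  have hp8 : (0:ℝ) ≤ x^8 := pow_nonneg hx0 8
  have hx4 : x^4 ≤ x^2 * (1/16) := by
    have := mul_le_mul_of_nonneg_left hx2 hp2; nlinarith
  have hx6 : x^6 ≤ x^4 * (1/16) := by
    have := mul_le_mul_of_nonneg_left hx2 hp4; nlinarith
  have hx7 : x^7 ≤ x^6 * (1/4) := by
    have := mul_le_mul_of_nonneg_left hx hp6; nlinarith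
  have hx8 : x^8 ≤ x^6 * (1/16) := by
    have := mul_le_mul_of_nonneg_left hx2 hp6; nlinarith
  have hw0 : 0 ≤ w := by linarith
  have hw30 : w ≤ 1/30 := by linarith
  have hwabs : |(-w)| < 1 := by rw [abs_neg, abs_of_nonneg hw0]; linarith
  have hlog := Real.abs_log_sub_add_sum_range_le hwabs 3
  rw [abs_neg, abs_of_nonneg hw0] at hlog
  have hsum : (∑ i ∈ Finset.range 3, (-w) ^ (i + 1) / (i + 1) : ℝ)
      = -w + w^2/2 - w^3/3 := by
    simp [Finset.sum_range_succ]
    ring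
  have h1w : (1 : ℝ) - -w = 1 + w := by ring
  rw [hsum, h1w] at hlog
  rw [abs_le] at hlog
  have hr : w^4/(1-w) ≤ (30/29)*w^4 := by
    rw [div_le_iff₀ (by linarith)]
    nlinarith [mul_nonneg (pow_nonneg hw0 4) (by linarith : (0:ℝ) ≤ 1 - 30*w)]
  have hwlo2 : x^2/2 + x^4/24 ≤ w := by linarith
  have ha : w ≤ (5027/10000)*x^2 := by linarith
  have h3 : w^3 ≤ ((5027/10000)*x^2)^3 := pow_le_pow_left₀ hw0 ha 3
  have h4 : w^4 ≤ ((5027/10000)*x^2)^4 := pow_le_pow_left₀ hw0 ha 4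
  have h3' : w^3 ≤ (5027/10000)^3 * x^6 := by nlinarith
  have h4' : w^4 ≤ (5027/10000)^4 * x^8 := by nlinarith
  have hsq : (x^2/2 + x^4/24)^2 ≤ w^2 := pow_le_pow_left₀ (by positivity) hwlo2 2
  have hsq' : x^4/4 + x^6/24 + x^8/576 ≤ w^2 := by nlinarith
  have hpos : 0 ≤ w^3 * (1/3 - (30/29)*w) :=
    mul_nonneg (pow_nonneg hw0 3) (by linarith)
  constructor
  · -- lower bound
    have key : 0 ≤ (w - x^2/2) * (1 - (w + x^2/2)/2) :=
      mul_nonneg (by linarith) (by linarith)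
    nlinarith [hlog.2, key, hpos, hr]
  · -- upper bound
    nlinarith [hlog.1, hr, h3', h4', hsq', hwhi, hx7, hx8, hp8]


-- identity: log(1+e^t) = log 2 + t/2 + log (cosh (t/2))
lemma log_one_add_exp (t : ℝ) :
    Real.log (1 + Real.exp t) = Real.log 2 + t/2 + Real.log (Real.cosh (t/2)) := by
  have e1 : Real.exp (t/2) * Real.exp (t/2) = Real.exp t := by
    rw [← Real.exp_add]; ring_nf
  have e2 : Real.exp (t/2) * Real.exp (-(t/2)) = 1 := by
    rw [← Real.exp_add]; simp
  have h : 1 + Real.exp t = 2 * Real.exp (t/2) * Real.cosh (t/2) := by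
    rw [Real.cosh_eq]; linear_combination -e1 - e2
  rw [h, Real.log_mul (by positivity) (by positivity),
    Real.log_mul (by norm_num) (Real.exp_ne_zero _), Real.log_exp]

-- antiderivative facts
lemma hasDeriv_hi (t : ℝ) :
    HasDerivAt (fun t : ℝ => Real.log 2 * t + t^2/4 + t^3/24 - t^5/960 + t^7/14336)
      (Real.log 2 + t/2 + (t^2/8 - t^4/192 + t^6/2048)) t := by
  have h := (((((hasDerivAt_id t).const_mul (Real.log 2)).add
      ((hasDerivAt_pow 2 t).div_const 4)).add
      ((hasDerivAt_pow 3 t).div_const 24)).sub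
      ((hasDerivAt_pow 5 t).div_const 960)).add
      ((hasDerivAt_pow 7 t).div_const 14336)
  refine h.congr_deriv ?_
  push_cast
  ring

lemma hasDeriv_lo (t : ℝ) :
    HasDerivAt (fun t : ℝ => Real.log 2 * t + t^2/4 + t^3/24 - t^5/640)
      (Real.log 2 + t/2 + (t^2/8 - t^4/128)) t := by
  have h := ((((hasDerivAt_id t).const_mul (Real.log 2)).add
      ((hasDerivAt_pow 2 t).div_const 4)).add
      ((hasDerivAt_pow 3 t).div_const 24)).sub
      ((hasDerivAt_pow 5 t).div_const 640)
  refine h.congr_deriv ?_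
  push_cast
  ring

lemma integral_hi :
    (∫ t in (0:ℝ)..(1/2), (Real.log 2 + t/2 + (t^2/8 - t^4/192 + t^6/2048)))
      = Real.log 2 * (1/2) + 1/16 + 1/192 - 1/30720 + 1/1835008 := by
  rw [intervalIntegral.integral_eq_sub_of_hasDerivAt (fun t _ => hasDeriv_hi t)
    (Continuous.intervalIntegrable (by continuity) _ _)]
  norm_num

lemma integral_lo :
    (∫ t in (0:ℝ)..(1/2), (Real.log 2 + t/2 + (t^2/8 - t^4/128)))
      = Real.log 2 * (1/2) + 1/16 + 1/192 - 1/20480 := by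
  rw [intervalIntegral.integral_eq_sub_of_hasDerivAt (fun t _ => hasDeriv_lo t)
    (Continuous.intervalIntegrable (by continuity) _ _)]
  norm_num

open Set in
lemma J_bounds :
    Real.log 2 * (1/2) + 1/16 + 1/192 - 1/20480 ≤
      (∫ t in (0:ℝ)..(1/2), Real.log (1 + Real.exp t)) ∧
    (∫ t in (0:ℝ)..(1/2), Real.log (1 + Real.exp t)) ≤
      Real.log 2 * (1/2) + 1/16 + 1/192 - 1/30720 + 1/1835008 := by
  have hint : IntervalIntegrable (fun t => Real.log (1 + Real.exp t))
      MeasureTheory.volume 0 (1/2) := by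
    apply ContinuousOn.intervalIntegrable
    exact ContinuousOn.log (by fun_prop) (fun t _ => by positivity)
  constructor
  · rw [← integral_lo]
    apply intervalIntegral.integral_mono_on (by norm_num)
      (Continuous.intervalIntegrable (by continuity) _ _) hint
    intro t ht
    rw [log_one_add_exp t]
    have h := (logcosh_bounds (x := t/2) (by linarith [ht.1]) (by linarith [ht.2])).1
    have e : (t/2)^2/2 - (t/2)^4/8 = t^2/8 - t^4/128 := by ring
    linarith [e ▸ h]
  · rw [← integral_hi]
    apply intervalIntegral.integral_mono_on (by norm_num) hint
      (Continuous.intervalIntegrable (by continuity) _ _)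
    intro t ht
    rw [log_one_add_exp t]
    have h := (logcosh_bounds (x := t/2) (by linarith [ht.1]) (by linarith [ht.2])).2
    have e : (t/2)^2/2 - (t/2)^4/12 + (1/32)*(t/2)^6 = t^2/8 - t^4/192 + t^6/2048 := by ring
    linarith [e ▸ h]

lemma sqrt_exp_ge_one : 1 ≤ Real.sqrt (Real.exp 1) := by
  have h := Real.sq_sqrt (le_of_lt (Real.exp_pos 1))
  nlinarith [Real.sqrt_nonneg (Real.exp 1), Real.one_le_exp (by norm_num : (0:ℝ) ≤ 1)]

lemma subst_exp :
    (∫ u in (1:ℝ)..Real.sqrt (Real.exp 1), Real.log (1 + u) / u)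
      = ∫ t in (0:ℝ)..(1/2), Real.log (1 + Real.exp t) := by
  have h : (∫ t in (0:ℝ)..(1/2), Real.exp t • ((fun u => Real.log (1+u)/u) ∘ Real.exp) t)
      = ∫ u in (Real.exp 0)..(Real.exp (1/2)), Real.log (1+u)/u := by
    apply intervalIntegral.integral_comp_smul_deriv' (f := Real.exp)
      (fun x _ => Real.hasDerivAt_exp x) Real.continuous_exp.continuousOn
    apply ContinuousOn.mono (s := Set.Ioi (0:ℝ))
    · exact ContinuousOn.div
        (ContinuousOn.log (by fun_prop) (fun u hu => by
          have : (0:ℝ) < u := hu; positivity))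
        continuousOn_id (fun u hu => ne_of_gt hu)
    · rintro u ⟨x, -, rfl⟩
      exact Real.exp_pos x
  rw [Real.exp_zero, Real.exp_half] at h
  rw [← h]
  apply intervalIntegral.integral_congr
  intro t _
  simp only [smul_eq_mul, Function.comp_apply]
  rw [mul_comm, div_mul_cancel₀ _ (Real.exp_ne_zero t)]

lemma by_parts :
    (∫ u in (1:ℝ)..Real.sqrt (Real.exp 1), Real.log u / (u + 1))
      = (1/2) * Real.log (1 + Real.sqrt (Real.exp 1))
        - ∫ u in (1:ℝ)..Real.sqrt (Real.exp 1), Real.log (1 + u) / u := by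
  set s := Real.sqrt (Real.exp 1) with hs
  have hs1 : 1 ≤ s := sqrt_exp_ge_one
  have huIcc : Set.uIcc (1:ℝ) s = Set.Icc 1 s := Set.uIcc_of_le hs1
  have hmem : ∀ x ∈ Set.uIcc (1:ℝ) s, (1:ℝ) ≤ x := by
    intro x hx; rw [huIcc] at hx; exact hx.1
  have h := intervalIntegral.integral_mul_deriv_eq_deriv_mul
    (a := 1) (b := s) (u := Real.log) (v := fun y => Real.log (1+y))
    (u' := fun y => y⁻¹) (v' := fun y => (1+y)⁻¹)
    (fun x hx => Real.hasDerivAt_log (by have := hmem x hx; linarith))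
    (fun x hx => by
      have := hmem x hx
      simpa using (HasDerivAt.log ((hasDerivAt_id x).const_add 1) (by intro h0; first | linarith | (simp only [id_eq] at h0; linarith))))
    (ContinuousOn.intervalIntegrable
      (continuousOn_id.inv₀ (fun x hx => by have := hmem x hx; intro h0; first | linarith | (simp only [id_eq] at h0; linarith))))
    (ContinuousOn.intervalIntegrable (ContinuousOn.inv₀
      (continuousOn_const.add continuousOn_id)
      (fun x hx => by have := hmem x hx; intro h0; first | linarith | (simp only [id_eq] at h0; linarith))))
  have hlogs : Real.log s = 1/2 := by
    rw [hs, Real.log_sqrt (le_of_lt (Real.exp_pos 1)), Real.log_exp]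
  have e1 : (∫ u in (1:ℝ)..s, Real.log u / (u + 1))
      = ∫ x in (1:ℝ)..s, Real.log x * (1+x)⁻¹ := by
    apply intervalIntegral.integral_congr
    intro x _
    show Real.log x / (x + 1) = Real.log x * (1+x)⁻¹
    rw [div_eq_mul_inv, add_comm x 1]
  have e2 : (∫ x in (1:ℝ)..s, (fun y => y⁻¹) x * Real.log (1+x))
      = ∫ u in (1:ℝ)..s, Real.log (1 + u) / u := by
    apply intervalIntegral.integral_congr
    intro x _
    show x⁻¹ * Real.log (1+x) = Real.log (1 + x) / x
    rw [div_eq_mul_inv, mul_comm]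
  rw [e1, h, hlogs]
  simp only [Real.log_one, zero_mul, sub_zero]
  rw [← e2]

theorem delta1_bounds :
    -0.657 < 1 - 2 * Real.log (1 + Real.sqrt (Real.exp 1)) +
        4 * ∫ u in (1 : ℝ)..Real.sqrt (Real.exp 1), Real.log u / (u + 1) ∧
      1 - 2 * Real.log (1 + Real.sqrt (Real.exp 1)) +
        4 * (∫ u in (1 : ℝ)..Real.sqrt (Real.exp 1), Real.log u / (u + 1)) < -0.656 := by
  have hbp := by_parts
  have hsub := subst_exp
  have hJ := J_bounds
  have hlog2lo := Real.log_two_gt_d9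
  have hlog2hi := Real.log_two_lt_d9
  rw [hbp, hsub]
  norm_num
  constructor <;> linarith [hJ.1, hJ.2]
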